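/- Let p̂ ∈ [0,1], n ≥ 2 an integer, and L > 0 a real. If p ∈ 𝒫(p̂,n,L) and p̃ belongs to the convex hull of 𝒫(p̂,n,L) (as a subset of ℝ), then |p − p̃| ≤ √(8 p̃(1−p̃) L / n) + 26 L / (3(n−1)). -/
import Mathlib


/-- The confidence set `𝒫(p̂,n,L)` of transition probabilities. -/
def confSet (phat : ℝ) (n : ℕ) (L : ℝ) : Set ℝ :=
  {p' | 0 ≤ p' ∧ p' ≤ 1 ∧
    |Real.sqrt (p' * (1 - p')) - Real.sqrt (phat * (1 - phat))| ≤
      Real.sqrt (2 * L / ((n : ℝ) - 1)) ∧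
    |phat - p'| ≤ Real.sqrt (L / (2 * n)) ∧
    |phat - p'| ≤ Real.sqrt (2 * phat * (1 - phat) * L / n) + 7 * L / (3 * ((n : ℝ) - 1))}

/-- Bound on the distance between a point of the confidence set and a point of its convex hull. -/
theorem confSet_convexHull_dist_bound
    (phat : ℝ) (hphat0 : 0 ≤ phat) (hphat1 : phat ≤ 1)
    (n : ℕ) (hn : 2 ≤ n) (L : ℝ) (hL : 0 < L)
    (p ptil : ℝ) (hp : p ∈ confSet phat n L)
    (hptil : ptil ∈ convexHull ℝ (confSet phat n L)) :
    |p - ptil| ≤ Real.sqrt (8 * ptil * (1 - ptil) * L / n) + 26 * L / (3 * ((n : ℝ) - 1)) := by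
  obtain ⟨hp0, hp1, hpJ, hpH, hpB⟩ := hp
  have hn2 : (2:ℝ) ≤ (n:ℝ) := by exact_mod_cast hn
  have hn1pos : (0:ℝ) < (n:ℝ) - 1 := by linarith
  have hnpos : (0:ℝ) < (n:ℝ) := by linarith
  set nr : ℝ := (n : ℝ) with hnr
  set c := phat * (1 - phat) with hc
  have hc0 : 0 ≤ c := mul_nonneg hphat0 (by linarith)
  set B := Real.sqrt (2 * phat * (1 - phat) * L / nr) + 7 * L / (3 * (nr - 1)) with hB
  -- Step A: everything in the hull is within B of phat
  have hSball : confSet phat n L ⊆ Metric.closedBall phat B := by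
    intro q hq
    obtain ⟨_, _, _, _, h3⟩ := hq
    rw [Metric.mem_closedBall, Real.dist_eq, abs_sub_comm]
    exact h3
  have hptilB : |phat - ptil| ≤ B := by
    have h := convexHull_min hSball (convex_closedBall _ _) hptil
    rw [Metric.mem_closedBall, Real.dist_eq, abs_sub_comm] at h
    exact h
  -- Step B: sqrt c ≤ sqrt (ptil (1-ptil)) + e
  set e := Real.sqrt (2 * L / (nr - 1)) with he
  have he0 : 0 ≤ e := Real.sqrt_nonneg _
  have hkey : Real.sqrt c ≤ Real.sqrt (ptil * (1 - ptil)) + e := by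
    rcases le_or_gt (Real.sqrt c) e with h | h
    · have := Real.sqrt_nonneg (ptil * (1 - ptil)); linarith
    · set d := Real.sqrt c - e with hd
      have hd0 : 0 < d := by simp only [hd]; linarith
      have hconc : ConcaveOn ℝ (Set.Icc (0:ℝ) 1) (fun x : ℝ => x * (1 - x)) := by
        have h1 : (fun x : ℝ => x * (1 - x)) = fun x : ℝ => x - x ^ 2 := by
          funext x; ring
        rw [h1]
        exact ((concaveOn_id (convex_Icc _ _)).sub
          ((Even.convexOn_pow even_two).subset (Set.subset_univ _) (convex_Icc _ _)))
      have hT : Convex ℝ {x : ℝ | x ∈ Set.Icc (0:ℝ) 1 ∧ d ^ 2 ≤ x * (1 - x)} :=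
        hconc.convex_ge _
      have hsub : confSet phat n L ⊆ {x : ℝ | x ∈ Set.Icc (0:ℝ) 1 ∧ d ^ 2 ≤ x * (1 - x)} := by
        rintro q ⟨hq0, hq1, hq2, -, -⟩
        refine ⟨⟨hq0, hq1⟩, ?_⟩
        have h1 : d ≤ Real.sqrt (q * (1 - q)) := by
          have h2 := (abs_le.mp hq2).1
          simp only [hd, he, hc]
          linarith
        have h2 : d ^ 2 ≤ (Real.sqrt (q * (1 - q))) ^ 2 := pow_le_pow_left₀ hd0.le h1 2
        rwa [Real.sq_sqrt (mul_nonneg hq0 (by linarith))] at h2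
      obtain ⟨-, hlev⟩ := convexHull_min hsub hT hptil
      have h3 : d ≤ Real.sqrt (ptil * (1 - ptil)) := by
        have := Real.sqrt_le_sqrt hlev
        rwa [Real.sqrt_sq hd0.le] at this
      simp only [hd] at h3
      linarith
  -- Step C: arithmetic
  have habs : |p - ptil| ≤ 2 * Real.sqrt (2 * phat * (1 - phat) * L / nr)
      + 14 * L / (3 * (nr - 1)) := by
    have h1 : |p - ptil| ≤ |p - phat| + |phat - ptil| := abs_sub_le p phat ptil
    rw [abs_sub_comm p phat] at h1
    rw [hB] at hptilB hpB
    have h2 : 14 * L / (3 * (nr - 1)) = 2 * (7 * L / (3 * (nr - 1))) := by ring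
    linarith
  have h8 : (0:ℝ) ≤ 8 * L / nr := by positivity
  have h4sqrt : Real.sqrt 4 = 2 := by
    rw [show (4:ℝ) = 2 ^ 2 by norm_num, Real.sqrt_sq (by norm_num : (0:ℝ) ≤ 2)]
  have e1 : (8 * L / nr) * c = 4 * (2 * phat * (1 - phat) * L / nr) := by
    rw [hc]; ring
  have step1 : Real.sqrt ((8 * L / nr) * c) = 2 * Real.sqrt (2 * phat * (1 - phat) * L / nr) := by
    rw [e1, Real.sqrt_mul (by norm_num : (0:ℝ) ≤ 4), h4sqrt]
  have step2 : Real.sqrt ((8 * L / nr) * c) ≤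
      Real.sqrt ((8 * L / nr) * (ptil * (1 - ptil))) + Real.sqrt (8 * L / nr) * e := by
    rw [Real.sqrt_mul h8 c, Real.sqrt_mul h8 (ptil * (1 - ptil))]
    have := mul_le_mul_of_nonneg_left hkey (Real.sqrt_nonneg (8 * L / nr))
    linarith [this, mul_add (Real.sqrt (8 * L / nr)) (Real.sqrt (ptil * (1 - ptil))) e]
  have step3 : Real.sqrt (8 * L / nr) * e ≤ 4 * L / (nr - 1) := by
    rw [he, ← Real.sqrt_mul h8]
    have hmul : (8 * L / nr) * (2 * L / (nr - 1)) ≤ (4 * L / (nr - 1)) ^ 2 := by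
      rw [div_mul_div_comm, div_pow, div_le_div_iff₀ (by positivity) (by positivity)]
      nlinarith [mul_pos (mul_pos hL hL) hn1pos]
    calc Real.sqrt ((8 * L / nr) * (2 * L / (nr - 1))) ≤
        Real.sqrt ((4 * L / (nr - 1)) ^ 2) := Real.sqrt_le_sqrt hmul
      _ = 4 * L / (nr - 1) := Real.sqrt_sq (by positivity)
  have e2 : 8 * ptil * (1 - ptil) * L / nr = (8 * L / nr) * (ptil * (1 - ptil)) := by ring
  have e3 : 4 * L / (nr - 1) + 14 * L / (3 * (nr - 1)) = 26 * L / (3 * (nr - 1)) := by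
    field_simp; ring
  rw [e2]
  linarith [habs, step1, step2, step3]
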